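/- Let α > 1, let p be a probability vector on Fin m, let ρ_1, …, ρ_m and ρ_0 be density matrices on ℂ^d, and let η ∈ [0,1]. Set χ_α := (α/(α−1)) · log₂ tr((Σ_x p_x ρ_x^α)^{1/α}), ζ' := ((1−η) Σ_x p_x ρ_x^α + η ρ_0^α)^{1/α}, μ' := ζ'/tr(ζ'), and χ'_α := (α/(α−1)) · log₂ tr(ζ'). Then χ'_α − χ_α ≥ η · ( (1/(α−1)) · log₂ tr(ρ_0^α (μ')^{1−α}) − χ_α ). (This is the inequality χ_α(ρ'_{XQ}) − χ_α(ρ_{XQ}) ≥ η (D_α(ρ_0‖μ_{α,Q}(ρ'_{XQ})) − χ_α(ρ_{XQ})) for the extended cq-state ρ'_{XQ} = (1−η) ρ_{XQ} + η |⊥⟩⟨⊥| ⊗ ρ_0.) -/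

import Mathlib

open Matrix ComplexOrder

/-- Matrix power via functional calculus on eigenvalues, with the convention `0 ^ β = 0`
(matrices that are not Hermitian are sent to `0`). -/
noncomputable def mpow {d : ℕ} (A : Matrix (Fin d) (Fin d) ℂ) (β : ℝ) :
    Matrix (Fin d) (Fin d) ℂ :=
  if hA : A.IsHermitian then
    (hA.eigenvectorUnitary : Matrix (Fin d) (Fin d) ℂ) *
      Matrix.diagonal (fun i =>
        ((if hA.eigenvalues i = 0 then (0 : ℝ) else hA.eigenvalues i ^ β : ℝ) : ℂ)) *
      star (hA.eigenvectorUnitary : Matrix (Fin d) (Fin d) ℂ)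
  else 0

noncomputable def fpow (β t : ℝ) : ℝ := if t = 0 then 0 else t ^ β

lemma fpow_nonneg (β : ℝ) {t : ℝ} (ht : 0 ≤ t) : 0 ≤ fpow β t := by
  unfold fpow; split
  · exact le_refl 0
  · exact Real.rpow_nonneg ht β

lemma fpow_pos (β : ℝ) {t : ℝ} (ht : 0 < t) : 0 < fpow β t := by
  unfold fpow; rw [if_neg (ne_of_gt ht)]; exact Real.rpow_pos_of_pos ht β

lemma fpow_of_pos (β : ℝ) {t : ℝ} (ht : 0 < t) : fpow β t = t ^ β := by
  unfold fpow; rw [if_neg (ne_of_gt ht)]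

lemma herm_decomp {d : ℕ} {V : Matrix (Fin d) (Fin d) ℂ} (g : Fin d → ℝ) :
    (V * Matrix.diagonal (fun i => ((g i : ℝ) : ℂ)) * star V).IsHermitian := by
  rw [Matrix.star_eq_conjTranspose]
  exact Matrix.isHermitian_mul_mul_conjTranspose V
    (Matrix.isHermitian_diagonal_of_self_adjoint _ (by
      ext i; simp [Pi.star_apply, Complex.star_def, Complex.conj_ofReal]))

lemma mpow_spectral {d : ℕ} {A V : Matrix (Fin d) (Fin d) ℂ}
    (hV : V ∈ Matrix.unitaryGroup (Fin d) ℂ) (g : Fin d → ℝ)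
    (hAV : A = V * Matrix.diagonal (fun i => ((g i : ℝ) : ℂ)) * star V) (β : ℝ) :
    mpow A β = V * Matrix.diagonal (fun i => ((fpow β (g i) : ℝ) : ℂ)) * star V := by
  have hA : A.IsHermitian := hAV ▸ herm_decomp g
  have hVsV : star V * V = 1 := Matrix.mem_unitaryGroup_iff'.mp hV
  have hVVs : V * star V = 1 := Matrix.mem_unitaryGroup_iff.mp hV
  set u : Matrix (Fin d) (Fin d) ℂ := (hA.eigenvectorUnitary : Matrix (Fin d) (Fin d) ℂ) with hu
  have husu : star u * u = 1 := Matrix.mem_unitaryGroup_iff'.mp (SetLike.coe_mem _)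
  have huus : u * star u = 1 := Matrix.mem_unitaryGroup_iff.mp (SetLike.coe_mem _)
  set e : Fin d → ℝ := hA.eigenvalues with he
  have hspec : A = u * Matrix.diagonal (fun i => ((e i : ℝ) : ℂ)) * star u := by
    exact hA.spectral_theorem
  set W : Matrix (Fin d) (Fin d) ℂ := star u * V with hW
  have hDW : Matrix.diagonal (fun i => ((e i : ℝ) : ℂ)) * W
      = W * Matrix.diagonal (fun i => ((g i : ℝ) : ℂ)) := by
    have h1 : star u * A * V = Matrix.diagonal (fun i => ((e i : ℝ) : ℂ)) * W := by
      rw [hspec]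
      calc star u * (u * Matrix.diagonal (fun i => ((e i : ℝ) : ℂ)) * star u) * V
          = (star u * u) * Matrix.diagonal (fun i => ((e i : ℝ) : ℂ)) * (star u * V) := by
            simp only [mul_assoc]
        _ = _ := by rw [husu, one_mul]
    have h2 : star u * A * V = W * Matrix.diagonal (fun i => ((g i : ℝ) : ℂ)) := by
      rw [hAV]
      calc star u * (V * Matrix.diagonal (fun i => ((g i : ℝ) : ℂ)) * star V) * V
          = (star u * V) * Matrix.diagonal (fun i => ((g i : ℝ) : ℂ)) * (star V * V) := by
            simp only [mul_assoc]
        _ = _ := by rw [hVsV, mul_one]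
    rw [← h1, h2]
  have hkey : ∀ i j, W i j ≠ 0 → e i = g j := by
    intro i j hWij
    have := congrFun (congrFun hDW i) j
    simp only [Matrix.diagonal_mul, Matrix.mul_diagonal] at this
    have : ((e i : ℝ) : ℂ) = ((g j : ℝ) : ℂ) := by
      rw [mul_comm] at this
      exact mul_left_cancel₀ hWij this
    exact_mod_cast this
  have hDWf : Matrix.diagonal (fun i => ((fpow β (e i) : ℝ) : ℂ)) * W
      = W * Matrix.diagonal (fun i => ((fpow β (g i) : ℝ) : ℂ)) := by
    ext i j
    simp only [Matrix.diagonal_mul, Matrix.mul_diagonal]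
    by_cases hWij : W i j = 0
    · simp [hWij]
    · rw [hkey i j hWij, mul_comm]
  have : mpow A β = u * Matrix.diagonal (fun i => ((fpow β (e i) : ℝ) : ℂ)) * star u := by
    rw [mpow, dif_pos hA]
    rfl
  rw [this]
  calc u * Matrix.diagonal (fun i => ((fpow β (e i) : ℝ) : ℂ)) * star u
      = u * Matrix.diagonal (fun i => ((fpow β (e i) : ℝ) : ℂ)) * (star u * (V * star V)) := by
        rw [hVVs, mul_one]
    _ = u * (Matrix.diagonal (fun i => ((fpow β (e i) : ℝ) : ℂ)) * W) * star V := by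
        rw [hW]; simp only [← mul_assoc]
    _ = u * (W * Matrix.diagonal (fun i => ((fpow β (g i) : ℝ) : ℂ))) * star V := by rw [hDWf]
    _ = (u * star u) * (V * Matrix.diagonal (fun i => ((fpow β (g i) : ℝ) : ℂ)) * star V) := by
        simp only [hW, mul_assoc]
    _ = _ := by rw [huus, one_mul]

section Helpers
open Matrix ComplexOrder

variable {d : ℕ}

lemma psd_decomp {V : Matrix (Fin d) (Fin d) ℂ} (g : Fin d → ℝ)
    (hg : ∀ i, 0 ≤ g i) :
    (V * Matrix.diagonal (fun i => ((g i : ℝ) : ℂ)) * star V).PosSemidef := by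
  rw [Matrix.star_eq_conjTranspose]
  exact (Matrix.PosSemidef.diagonal (fun i => by
    simpa using Complex.zero_le_real.mpr (hg i))).mul_mul_conjTranspose_same V

lemma trace_decomp {V : Matrix (Fin d) (Fin d) ℂ} (hV : V ∈ Matrix.unitaryGroup (Fin d) ℂ)
    (g : Fin d → ℝ) :
    (V * Matrix.diagonal (fun i => ((g i : ℝ) : ℂ)) * star V).trace = ((∑ i, g i : ℝ) : ℂ) := by
  rw [Matrix.trace_mul_cycle, Matrix.mem_unitaryGroup_iff'.mp hV, one_mul,
    Matrix.trace_diagonal]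
  push_cast; rfl

lemma trace_mul_decomp (X : Matrix (Fin d) (Fin d) ℂ) {V : Matrix (Fin d) (Fin d) ℂ}
    (g : Fin d → ℝ) :
    (X * (V * Matrix.diagonal (fun i => ((g i : ℝ) : ℂ)) * star V)).trace
      = ∑ j, (star V * X * V) j j * ((g j : ℝ) : ℂ) := by
  have h1 : X * (V * Matrix.diagonal (fun i => ((g i : ℝ) : ℂ)) * star V)
      = (X * V * Matrix.diagonal (fun i => ((g i : ℝ) : ℂ))) * star V := by
    simp only [mul_assoc]
  rw [h1, Matrix.trace_mul_comm, ← mul_assoc, ← mul_assoc]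
  simp [Matrix.trace, Matrix.diag, Matrix.mul_diagonal, mul_comm]

lemma psd_diag_entry {X : Matrix (Fin d) (Fin d) ℂ} (hX : X.PosSemidef) (j : Fin d) :
    X j j = (((X j j).re : ℝ) : ℂ) ∧ 0 ≤ (X j j).re := by
  have h := hX.dotProduct_mulVec_nonneg (Pi.single j 1)
  have he : dotProduct (star (Pi.single j 1)) (X *ᵥ (Pi.single j 1)) = X j j := by
    simp [dotProduct, Matrix.mulVec, Pi.single_apply]
  rw [he] at h
  rw [Complex.le_def] at h
  simp only [Complex.zero_re, Complex.zero_im] at h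
  exact ⟨by apply Complex.ext <;> simp [h.2.symm], h.1⟩

lemma diag_entry_sum (W : Matrix (Fin d) (Fin d) ℂ) (lam : Fin d → ℝ) (j : Fin d) :
    (star W * Matrix.diagonal (fun i => ((lam i : ℝ) : ℂ)) * W) j j
      = ((∑ i, lam i * Complex.normSq (W i j) : ℝ) : ℂ) := by
  simp only [Matrix.mul_apply, Matrix.star_eq_conjTranspose, Matrix.conjTranspose_apply,
    Matrix.diagonal_apply, mul_ite, mul_zero, ite_mul, zero_mul, Finset.sum_ite_eq, Finset.sum_ite_eq',
    Finset.mem_univ, if_true]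
  push_cast
  refine Finset.sum_congr rfl fun i _ => ?_
  rw [Complex.normSq_eq_conj_mul_self, ← Complex.star_def]
  ring

lemma sum_fpow_pos {v : Fin d → ℝ} (hnn : ∀ i, 0 ≤ v i) (hv : 0 < ∑ i, v i) (β : ℝ) :
    0 < ∑ i, fpow β (v i) := by
  obtain ⟨i, hi⟩ : ∃ i, 0 < v i := by
    by_contra h
    push_neg at h
    have : ∑ i, v i = 0 := Finset.sum_eq_zero fun i _ => le_antisymm (h i) (hnn i)
    linarith
  calc (0:ℝ) < fpow β (v i) := fpow_pos β hi
    _ ≤ ∑ i, fpow β (v i) :=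
      Finset.single_le_sum (fun i _ => fpow_nonneg β (hnn i)) (Finset.mem_univ i)

lemma smul_psd {X : Matrix (Fin d) (Fin d) ℂ} (hX : X.PosSemidef) {c : ℝ} (hc : 0 ≤ c) :
    (((c : ℝ) : ℂ) • X).PosSemidef := by
  refine Matrix.PosSemidef.of_dotProduct_mulVec_nonneg ?_ ?_
  · unfold Matrix.IsHermitian
    rw [Matrix.conjTranspose_smul, hX.1.eq]
    congr 1
    simp [Complex.star_def, Complex.conj_ofReal]
  · intro x
    rw [Matrix.smul_mulVec, dotProduct_smul, smul_eq_mul]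
    exact mul_nonneg (Complex.zero_le_real.mpr hc) (hX.dotProduct_mulVec_nonneg x)

end Helpers

section Extra
open Matrix ComplexOrder
variable {d : ℕ}

lemma fpow_eq {β t : ℝ} (hβ : β ≠ 0) (ht : 0 ≤ t) : fpow β t = t ^ β := by
  unfold fpow
  split
  · rw [‹t = 0›, Real.zero_rpow hβ]
  · rfl

lemma fpow_eq_zero_iff {β t : ℝ} (ht : 0 ≤ t) : fpow β t = 0 ↔ t = 0 := by
  constructor
  · intro h
    by_contra ht0
    exact absurd h (ne_of_gt (fpow_pos β (lt_of_le_of_ne ht (Ne.symm ht0))))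
  · intro h; simp [fpow, h]

lemma mpow_psd {X : Matrix (Fin d) (Fin d) ℂ} (hX : X.PosSemidef) (β : ℝ) :
    (mpow X β).PosSemidef := by
  have hspec : X = (hX.1.eigenvectorUnitary : Matrix (Fin d) (Fin d) ℂ) *
      Matrix.diagonal (fun i => ((hX.1.eigenvalues i : ℝ) : ℂ)) *
      star (hX.1.eigenvectorUnitary : Matrix (Fin d) (Fin d) ℂ) := by
    exact hX.1.spectral_theorem
  rw [mpow_spectral (SetLike.coe_mem _) _ hspec β]
  exact psd_decomp _ (fun i => fpow_nonneg β (hX.eigenvalues_nonneg i))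

lemma mpow_trace {X : Matrix (Fin d) (Fin d) ℂ} (hX : X.PosSemidef) (β : ℝ) :
    (mpow X β).trace = ((∑ i, fpow β (hX.1.eigenvalues i) : ℝ) : ℂ) := by
  have hspec : X = (hX.1.eigenvectorUnitary : Matrix (Fin d) (Fin d) ℂ) *
      Matrix.diagonal (fun i => ((hX.1.eigenvalues i : ℝ) : ℂ)) *
      star (hX.1.eigenvectorUnitary : Matrix (Fin d) (Fin d) ℂ) := by
    exact hX.1.spectral_theorem
  rw [mpow_spectral (SetLike.coe_mem _) _ hspec β]
  exact trace_decomp (SetLike.coe_mem _) _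

lemma trace_psd_coe {X : Matrix (Fin d) (Fin d) ℂ} (hX : X.PosSemidef) :
    X.trace = ((∑ i, hX.1.eigenvalues i : ℝ) : ℂ) := by
  have hspec : X = (hX.1.eigenvectorUnitary : Matrix (Fin d) (Fin d) ℂ) *
      Matrix.diagonal (fun i => ((hX.1.eigenvalues i : ℝ) : ℂ)) *
      star (hX.1.eigenvectorUnitary : Matrix (Fin d) (Fin d) ℂ) := by
    exact hX.1.spectral_theorem
  conv_lhs => rw [hspec]
  exact trace_decomp (SetLike.coe_mem _) _

/-- positive trace of `mpow` of a PSD matrix with positive trace -/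
lemma mpow_trace_pos {X : Matrix (Fin d) (Fin d) ℂ} (hX : X.PosSemidef)
    (hXtr : 0 < X.trace.re) (β : ℝ) : 0 < ((mpow X β).trace).re := by
  rw [mpow_trace hX β, Complex.ofReal_re]
  apply sum_fpow_pos (fun i => hX.eigenvalues_nonneg i) _ β
  have := trace_psd_coe hX
  rw [this, Complex.ofReal_re] at hXtr
  exact hXtr

end Extra

set_option maxHeartbeats 1000000 in
/-- **Extending an ensemble by an extra state.**
For the cq-state `ρ'_{XQ} = (1−η) ρ_{XQ} + η |⊥⟩⟨⊥| ⊗ ρ₀`, with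
`ζ' = ((1−η) ∑ x, p x • ρ x ^ α + η ρ₀ ^ α)^(1/α)` and `μ' = ζ'/tr ζ'`:
`χ_α(ρ'_{XQ}) − χ_α(ρ_{XQ}) ≥ η (D_α(ρ₀‖μ') − χ_α(ρ_{XQ}))`. -/
theorem chiAlpha_extension_inequality
    (d m : ℕ) (α : ℝ) (hα : 1 < α)
    (p : Fin m → ℝ) (hp_nonneg : ∀ x, 0 ≤ p x) (hp_sum : ∑ x, p x = 1)
    (ρ : Fin m → Matrix (Fin d) (Fin d) ℂ)
    (hρ_psd : ∀ x, (ρ x).PosSemidef) (hρ_tr : ∀ x, (ρ x).trace = 1)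
    (ρ₀ : Matrix (Fin d) (Fin d) ℂ) (hρ₀_psd : ρ₀.PosSemidef) (hρ₀_tr : ρ₀.trace = 1)
    (η : ℝ) (hη0 : 0 ≤ η) (hη1 : η ≤ 1)
    (χ χ' : ℝ) (ζ' μ' : Matrix (Fin d) (Fin d) ℂ)
    (hχ : χ = (α / (α - 1)) *
        Real.logb 2 ((mpow (∑ x, (p x : ℂ) • mpow (ρ x) α) (1 / α)).trace).re)
    (hζ' : ζ' = mpow (((1 - η : ℝ) : ℂ) • ∑ x, (p x : ℂ) • mpow (ρ x) α +
        ((η : ℝ) : ℂ) • mpow ρ₀ α) (1 / α))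
    (hμ' : μ' = (ζ'.trace)⁻¹ • ζ')
    (hχ' : χ' = (α / (α - 1)) * Real.logb 2 ((ζ'.trace).re)) :
    χ' - χ ≥ η * ((1 / (α - 1)) *
        Real.logb 2 ((mpow ρ₀ α * mpow μ' (1 - α)).trace).re - χ) := by
  have hα0 : (0:ℝ) < α := by linarith
  have hαne : α ≠ 0 := ne_of_gt hα0
  have hα1 : (0:ℝ) < α - 1 := by linarith
  -- the averaged ensemble state power and the perturbed matrix
  set S : Matrix (Fin d) (Fin d) ℂ := ∑ x, (p x : ℂ) • mpow (ρ x) α with hSdef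
  set P : Matrix (Fin d) (Fin d) ℂ := mpow ρ₀ α with hPdef
  set M : Matrix (Fin d) (Fin d) ℂ := ((1 - η : ℝ) : ℂ) • S + ((η : ℝ) : ℂ) • P with hMdef
  have hPpsd : P.PosSemidef := mpow_psd hρ₀_psd α
  have hSpsd : S.PosSemidef := by
    rw [hSdef]
    exact Finset.sum_induction _ Matrix.PosSemidef (fun a b ha hb => ha.add hb)
      Matrix.PosSemidef.zero (fun x _ => smul_psd (mpow_psd (hρ_psd x) α) (hp_nonneg x))
  have hMpsd : M.PosSemidef :=
    (smul_psd hSpsd (by linarith : (0:ℝ) ≤ 1 - η)).add (smul_psd hPpsd hη0)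
  -- positive traces
  have hPtr : 0 < P.trace.re := by
    rw [hPdef]
    exact mpow_trace_pos hρ₀_psd (by rw [hρ₀_tr]; norm_num) α
  have hStr : 0 < S.trace.re := by
    have hterm : ∀ x : Fin m, 0 ≤ ((p x : ℂ) • mpow (ρ x) α).trace.re := by
      intro x
      rw [Matrix.trace_smul, smul_eq_mul, mpow_trace (hρ_psd x) α]
      rw [← Complex.ofReal_mul, Complex.ofReal_re]
      exact mul_nonneg (hp_nonneg x)
        (Finset.sum_nonneg fun i _ => fpow_nonneg α ((hρ_psd x).eigenvalues_nonneg i))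
    obtain ⟨x₀, hx₀⟩ : ∃ x, 0 < p x := by
      by_contra h
      push_neg at h
      have : ∑ x, p x = 0 :=
        Finset.sum_eq_zero fun x _ => le_antisymm (h x) (hp_nonneg x)
      rw [hp_sum] at this; norm_num at this
    have hx₀tr : 0 < ((p x₀ : ℂ) • mpow (ρ x₀) α).trace.re := by
      rw [Matrix.trace_smul, smul_eq_mul, mpow_trace (hρ_psd x₀) α]
      rw [← Complex.ofReal_mul, Complex.ofReal_re]
      refine mul_pos hx₀ ?_
      apply sum_fpow_pos (fun i => (hρ_psd x₀).eigenvalues_nonneg i) _ α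
      have := trace_psd_coe (hρ_psd x₀)
      rw [hρ_tr x₀] at this
      have : (1:ℝ) = ∑ i, (hρ_psd x₀).1.eigenvalues i := by exact_mod_cast this
      linarith
    rw [hSdef, Matrix.trace_sum]
    rw [Complex.re_sum]
    calc (0:ℝ) < ((p x₀ : ℂ) • mpow (ρ x₀) α).trace.re := hx₀tr
      _ ≤ ∑ x, ((p x : ℂ) • mpow (ρ x) α).trace.re :=
        Finset.single_le_sum (fun x _ => hterm x) (Finset.mem_univ x₀)
  have hMtr : 0 < M.trace.re := by
    rw [hMdef]
    simp only [Matrix.trace_add, Matrix.trace_smul, Complex.add_re, smul_eq_mul,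
      Complex.re_ofReal_mul]
    rcases lt_or_eq_of_le hη1 with h | h
    · have h1 : 0 < (1-η) * S.trace.re := mul_pos (by linarith) hStr
      have h2 : 0 ≤ η * P.trace.re := mul_nonneg hη0 (le_of_lt hPtr)
      linarith
    · rw [h]; simpa using hPtr
  -- spectral data for M
  have hMh : M.IsHermitian := hMpsd.1
  set uM : Matrix (Fin d) (Fin d) ℂ := (hMh.eigenvectorUnitary : Matrix (Fin d) (Fin d) ℂ)
    with huMdef
  have huM : uM ∈ Matrix.unitaryGroup (Fin d) ℂ := SetLike.coe_mem _
  set e : Fin d → ℝ := hMh.eigenvalues with hedef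
  have he : ∀ i, 0 ≤ e i := fun i => hMpsd.eigenvalues_nonneg i
  have hMspec : M = uM * Matrix.diagonal (fun i => ((e i : ℝ) : ℂ)) * star uM := by
    exact hMh.spectral_theorem
  have hMtrace : M.trace = ((∑ i, e i : ℝ) : ℂ) := by
    conv_lhs => rw [hMspec]
    exact trace_decomp huM e
  have hsume : 0 < ∑ i, e i := by
    rw [hMtrace, Complex.ofReal_re] at hMtr; exact hMtr
  -- ζ' and its trace
  set g : Fin d → ℝ := fun i => fpow (1/α) (e i) with hgdef
  have hg : ∀ i, 0 ≤ g i := fun i => fpow_nonneg _ (he i)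
  have hζ'1 : ζ' = uM * Matrix.diagonal (fun i => ((g i : ℝ) : ℂ)) * star uM := by
    rw [hζ']
    exact mpow_spectral huM e hMspec (1/α)
  set T : ℝ := ∑ i, g i with hTdef
  have hT : ζ'.trace = ((T : ℝ) : ℂ) := by rw [hζ'1]; exact trace_decomp huM g
  have hT0 : 0 < T := sum_fpow_pos he hsume (1/α)
  -- μ' and its (1-α) power
  set mv : Fin d → ℝ := fun i => T⁻¹ * g i with hmvdef
  have hmv : ∀ i, 0 ≤ mv i := fun i => mul_nonneg (inv_nonneg.mpr hT0.le) (hg i)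
  have hmvsum : ∑ i, mv i = 1 := by
    rw [hmvdef]
    rw [← Finset.mul_sum, ← hTdef, inv_mul_cancel₀ (ne_of_gt hT0)]
  have hdiag : ((T : ℂ))⁻¹ • Matrix.diagonal (fun i => ((g i : ℝ) : ℂ))
      = Matrix.diagonal (fun i => ((mv i : ℝ) : ℂ)) := by
    ext i j
    simp only [Matrix.smul_apply, Matrix.diagonal_apply, smul_eq_mul, mul_ite, mul_zero,
      hmvdef]
    split
    · push_cast; ring
    · rfl
  have hμ'1 : μ' = uM * Matrix.diagonal (fun i => ((mv i : ℝ) : ℂ)) * star uM := by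
    rw [hμ', hT, hζ'1]
    rw [← smul_mul_assoc, ← mul_smul_comm, hdiag]
  set h : Fin d → ℝ := fun j => fpow (1-α) (mv j) with hhdef
  have hh : ∀ j, 0 ≤ h j := fun j => fpow_nonneg _ (hmv j)
  have hμpow : mpow μ' (1-α) = uM * Matrix.diagonal (fun i => ((h i : ℝ) : ℂ)) * star uM :=
    mpow_spectral huM mv hμ'1 (1-α)
  -- unitarity facts
  have husu : star uM * uM = 1 := Matrix.mem_unitaryGroup_iff'.mp huM
  have huus : uM * star uM = 1 := Matrix.mem_unitaryGroup_iff.mp huM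
  -- diag entries of conjugated P
  have hPconj : (star uM * P * uM).PosSemidef := by
    rw [Matrix.star_eq_conjTranspose]
    exact hPpsd.conjTranspose_mul_mul_same uM
  set q0 : Fin d → ℝ := fun j => ((star uM * P * uM) j j).re with hq0def
  have hq0c : ∀ j, (star uM * P * uM) j j = ((q0 j : ℝ) : ℂ) :=
    fun j => (psd_diag_entry hPconj j).1
  have hq0nn : ∀ j, 0 ≤ q0 j := fun j => (psd_diag_entry hPconj j).2
  set B : ℝ := ∑ j, q0 j * h j with hBdef
  have htrB : (P * mpow μ' (1-α)).trace = ((B:ℝ):ℂ) := by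
    rw [hμpow, trace_mul_decomp P h, hBdef]
    push_cast
    refine Finset.sum_congr rfl fun j _ => ?_
    rw [hq0c j]
  -- S spectral data
  have hSh := hSpsd.1
  set uS : Matrix (Fin d) (Fin d) ℂ := (hSh.eigenvectorUnitary : Matrix (Fin d) (Fin d) ℂ)
    with huSdef
  have huS : uS ∈ Matrix.unitaryGroup (Fin d) ℂ := SetLike.coe_mem _
  set lam : Fin d → ℝ := hSh.eigenvalues with hlamdef
  have hlam : ∀ i, 0 ≤ lam i := fun i => hSpsd.eigenvalues_nonneg i
  have hSspec : S = uS * Matrix.diagonal (fun i => ((lam i : ℝ):ℂ)) * star uS := by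
    exact hSh.spectral_theorem
  set W : Matrix (Fin d) (Fin d) ℂ := star uS * uM with hWdef
  have huW : W ∈ Matrix.unitaryGroup (Fin d) ℂ := mul_mem (Unitary.star_mem huS) huM
  set cc : Fin d → Fin d → ℝ := fun i j => Complex.normSq (W i j) with hccdef
  have hccnn : ∀ i j, 0 ≤ cc i j := fun i j => Complex.normSq_nonneg _
  have hSconj : ∀ j, (star uM * S * uM) j j = ((∑ i, lam i * cc i j : ℝ) : ℂ) := by
    intro j
    have hrw : star uM * S * uM = star W * Matrix.diagonal (fun i => ((lam i:ℝ):ℂ)) * W := by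
      rw [hSspec, hWdef]
      simp only [Matrix.star_mul, star_star, mul_assoc]
    rw [hrw, diag_entry_sum]
  set A : ℝ := ∑ j, (∑ i, lam i * cc i j) * h j with hAdef
  have htrA : (S * mpow μ' (1-α)).trace = ((A:ℝ):ℂ) := by
    rw [hμpow, trace_mul_decomp S h, hAdef]
    push_cast
    refine Finset.sum_congr rfl fun j _ => ?_
    rw [hSconj j]
    push_cast; ring
  -- conjugated M is diagonal
  have hMconj : star uM * M * uM = Matrix.diagonal (fun i => ((e i:ℝ):ℂ)) := by
    conv_lhs => rw [hMspec]
    calc star uM * (uM * Matrix.diagonal (fun i => ((e i:ℝ):ℂ)) * star uM) * uM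
        = (star uM * uM) * Matrix.diagonal (fun i => ((e i:ℝ):ℂ)) * (star uM * uM) := by
          simp only [mul_assoc]
      _ = _ := by rw [husu]; simp
  have htrM : (M * mpow μ' (1-α)).trace = ((∑ j, e j * h j : ℝ):ℂ) := by
    rw [hμpow, trace_mul_decomp M h, hMconj]
    push_cast
    refine Finset.sum_congr rfl fun j _ => ?_
    rw [Matrix.diagonal_apply_eq]
  -- linear expansion of the M trace
  have hMlin : (M * mpow μ' (1-α)).trace = ((1-η:ℝ):ℂ) * (S * mpow μ' (1-α)).trace
      + ((η:ℝ):ℂ) * (P * mpow μ' (1-α)).trace := by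
    rw [hMdef, Matrix.add_mul, smul_mul_assoc, smul_mul_assoc, Matrix.trace_add,
      Matrix.trace_smul, Matrix.trace_smul]
    simp [smul_eq_mul]
  -- fundamental identity
  have hId : (1-η) * A + η * B = ∑ j, e j * h j := by
    have hx := hMlin
    rw [htrM, htrA, htrB] at hx
    exact_mod_cast hx.symm
  -- per-term computation
  have hterm : ∀ j, e j * h j = T ^ (α-1) * g j := by
    intro j
    rcases eq_or_lt_of_le (he j) with hej | hej
    · have hgj : g j = 0 := by simp [hgdef, ← hej, fpow]
      rw [← hej, hgj]; ring
    · have hgj : g j = e j ^ (1/α) := by rw [hgdef]; exact fpow_of_pos _ hej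
      have hgj0 : 0 < g j := fpow_pos _ hej
      have hmj : 0 < mv j := mul_pos (inv_pos.mpr hT0) hgj0
      have hhj : h j = (T⁻¹ * g j) ^ (1-α) := by rw [hhdef]; exact fpow_of_pos _ hmj
      have h1 : (T⁻¹ : ℝ) ^ (1-α) = T ^ (α-1) := by
        rw [Real.inv_rpow hT0.le, ← Real.rpow_neg hT0.le, neg_sub]
      have h2 : e j * (g j) ^ (1-α) = g j := by
        rw [hgj, ← Real.rpow_mul hej.le]
        nth_rewrite 1 [← Real.rpow_one (e j)]
        rw [← Real.rpow_add hej]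
        congr 1
        field_simp
        ring
      calc e j * h j = T^(α-1) * (e j * (g j) ^ (1-α)) := by
            rw [hhj, Real.mul_rpow (inv_nonneg.mpr hT0.le) hgj0.le, h1]; ring
        _ = T^(α-1) * g j := by rw [h2]
  have hsumT : ∑ j, e j * h j = T ^ α := by
    rw [Finset.sum_congr rfl (fun j _ => hterm j), ← Finset.mul_sum, ← hTdef]
    nth_rewrite 2 [← Real.rpow_one T]
    rw [← Real.rpow_add hT0]
    norm_num
  -- diagonal entries relation
  have hentry : ∀ j, e j = (1-η) * (∑ i, lam i * cc i j) + η * q0 j := by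
    intro j
    have h1 : (star uM * M * uM) j j = ((e j : ℝ):ℂ) := by
      rw [hMconj, Matrix.diagonal_apply_eq]
    have h2 : star uM * M * uM = ((1-η:ℝ):ℂ) • (star uM * S * uM)
        + ((η:ℝ):ℂ) • (star uM * P * uM) := by
      rw [hMdef, Matrix.mul_add, Matrix.add_mul, mul_smul_comm, mul_smul_comm,
        smul_mul_assoc, smul_mul_assoc]
    rw [h2] at h1
    have h3 : (((1-η:ℝ):ℂ) • (star uM * S * uM) + ((η:ℝ):ℂ) • (star uM * P * uM)) j j
        = ((1-η:ℝ):ℂ) * ((∑ i, lam i * cc i j : ℝ):ℂ) + ((η:ℝ):ℂ) * ((q0 j : ℝ):ℂ) := by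
      simp [Matrix.add_apply, Matrix.smul_apply, hSconj j, hq0c j, smul_eq_mul]
    rw [h3] at h1
    exact_mod_cast h1.symm
  have hsumSnn : ∀ j, 0 ≤ ∑ i, lam i * cc i j :=
    fun j => Finset.sum_nonneg fun i _ => mul_nonneg (hlam i) (hccnn i j)
  -- support conditions
  have hsuppS : ∀ j, e j = 0 → η < 1 → ∀ i, lam i * cc i j = 0 := by
    intro j hej hη1' i
    have h0 := hentry j
    rw [hej] at h0
    have t1 : 0 ≤ (1-η) * (∑ i, lam i * cc i j) := mul_nonneg (by linarith) (hsumSnn j)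
    have t2 : 0 ≤ η * q0 j := mul_nonneg hη0 (hq0nn j)
    have t3 : (1-η) * (∑ i, lam i * cc i j) = 0 := by linarith
    have t4 : (∑ i, lam i * cc i j) = 0 := by
      rcases mul_eq_zero.mp t3 with hcase | hcase
      · exact absurd hcase (ne_of_gt (by linarith))
      · exact hcase
    exact (Finset.sum_eq_zero_iff_of_nonneg
      (fun i _ => mul_nonneg (hlam i) (hccnn i j))).mp t4 i (Finset.mem_univ i)
  have hsuppP : ∀ j, e j = 0 → 0 < η → q0 j = 0 := by
    intro j hej hη0'
    have h0 := hentry j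
    rw [hej] at h0
    have t1 : 0 ≤ (1-η) * (∑ i, lam i * cc i j) := mul_nonneg (by linarith) (hsumSnn j)
    have t2 : 0 ≤ η * q0 j := mul_nonneg hη0 (hq0nn j)
    have t3 : η * q0 j = 0 := by linarith
    rcases mul_eq_zero.mp t3 with hcase | hcase
    · exact absurd hcase (ne_of_gt hη0')
    · exact hcase
  -- the χ quantity
  set cS : ℝ := ∑ i, fpow (1/α) (lam i) with hcSdef
  have hcS : (mpow S (1/α)).trace = ((cS:ℝ):ℂ) := by
    rw [mpow_spectral huS lam hSspec (1/α)]
    exact trace_decomp huS _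
  have hStrace : S.trace = ((∑ i, lam i : ℝ):ℂ) := by
    conv_lhs => rw [hSspec]
    exact trace_decomp huS lam
  have hsumlam : 0 < ∑ i, lam i := by rw [hStrace, Complex.ofReal_re] at hStr; exact hStr
  have hcS0 : 0 < cS := sum_fpow_pos hlam hsumlam (1/α)
  have hχc : χ = (α/(α-1)) * Real.logb 2 cS := by rw [hχ, hcS, Complex.ofReal_re]
  have hχ'T : χ' = (α/(α-1)) * Real.logb 2 T := by rw [hχ', hT, Complex.ofReal_re]
  have hIdT : (1-η) * A + η * B = T ^ α := by rw [hId, hsumT]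
  have hAnn : 0 ≤ A := Finset.sum_nonneg fun j _ => mul_nonneg (hsumSnn j) (hh j)
  have hBnn : 0 ≤ B := Finset.sum_nonneg fun j _ => mul_nonneg (hq0nn j) (hh j)
  -- rewrite the goal
  rw [htrB, Complex.ofReal_re]
  -- case η = 0
  by_cases hη00 : η = 0
  · subst hη00
    have hM0 : M = S := by rw [hMdef]; norm_num
    have hTc : T = cS := by
      have h1 : ζ'.trace = ((cS:ℝ):ℂ) := by rw [hζ', hM0, hcS]
      rw [hT] at h1
      exact_mod_cast h1
    rw [zero_mul, hχ'T, hχc, hTc]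
    linarith
  have hη0' : 0 < η := lt_of_le_of_ne hη0 (Ne.symm hη00)
  -- B > 0
  have hq0sum : ∑ j, q0 j = P.trace.re := by
    have h1 : (star uM * P * uM).trace = P.trace := by
      rw [Matrix.trace_mul_cycle, huus, one_mul]
    have h2 : (star uM * P * uM).trace = ((∑ j, q0 j :ℝ):ℂ) := by
      rw [Matrix.trace]
      push_cast
      exact Finset.sum_congr rfl fun j _ => hq0c j
    rw [h2] at h1
    rw [← h1, Complex.ofReal_re]
  obtain ⟨j0, hj0⟩ : ∃ j, 0 < q0 j := by
    by_contra hcon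
    push_neg at hcon
    have : ∑ j, q0 j ≤ 0 := Finset.sum_nonpos fun j _ => hcon j
    rw [hq0sum] at this
    linarith
  have hB0 : 0 < B := by
    have hej0 : 0 < e j0 := by
      rcases eq_or_lt_of_le (he j0) with hcase | hcase
      · exact absurd (hsuppP j0 hcase.symm hη0') (ne_of_gt hj0)
      · exact hcase
    have hgj0 : 0 < g j0 := fpow_pos _ hej0
    have hmj0 : 0 < mv j0 := mul_pos (inv_pos.mpr hT0) hgj0
    have hhj0 : 0 < h j0 := fpow_pos _ hmj0
    calc (0:ℝ) < q0 j0 * h j0 := mul_pos hj0 hhj0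
      _ ≤ B := Finset.single_le_sum (fun j _ => mul_nonneg (hq0nn j) (hh j)) (Finset.mem_univ j0)
  -- case η = 1
  by_cases hη11 : η = 1
  · subst hη11
    have hBT : B = T ^ α := by rw [← hIdT]; ring
    have hD : (1/(α-1)) * Real.logb 2 B = χ' := by
      rw [hBT, Real.logb_rpow_eq_mul_logb_of_pos hT0, hχ'T]
      ring
    rw [one_mul]
    linarith [hD]
  have hη1' : η < 1 := lt_of_le_of_ne hη1 hη11
  -- Hölder inequality: cS ^ α ≤ A
  have hWs : star W * W = 1 := Matrix.mem_unitaryGroup_iff'.mp huW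
  have hWs' : W * star W = 1 := Matrix.mem_unitaryGroup_iff.mp huW
  have hrow : ∀ i, ∑ j, cc i j = 1 := by
    intro i
    have h1 := congrFun (congrFun hWs' i) i
    have h2 : (W * star W) i i = ((∑ j, cc i j : ℝ):ℂ) := by
      simp only [Matrix.mul_apply, Matrix.star_eq_conjTranspose, Matrix.conjTranspose_apply,
        Complex.star_def, Complex.mul_conj]
      push_cast
      rfl
    rw [h2, Matrix.one_apply_eq] at h1
    exact_mod_cast h1
  have hcol : ∀ j, ∑ i, cc i j = 1 := by
    intro j
    have h1 := congrFun (congrFun hWs j) j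
    have h2 : (star W * W) j j = ((∑ i, cc i j : ℝ):ℂ) := by
      simp only [Matrix.mul_apply, Matrix.star_eq_conjTranspose, Matrix.conjTranspose_apply,
        Complex.star_def]
      push_cast
      refine Finset.sum_congr rfl fun i _ => ?_
      rw [hccdef, Complex.normSq_eq_conj_mul_self]
    rw [h2, Matrix.one_apply_eq] at h1
    exact_mod_cast h1
  have hpq : α.HolderConjugate (α/(α-1)) := Real.HolderConjugate.conjExponent hα
  set F : Fin d × Fin d → ℝ := fun ij => (cc ij.1 ij.2 * lam ij.1 * h ij.2) ^ (1/α) with hFdef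
  set G : Fin d × Fin d → ℝ := fun ij => (cc ij.1 ij.2 * mv ij.2) ^ ((α-1)/α) with hGdef
  have hstep1 : ∀ i j, cc i j * fpow (1/α) (lam i) = F (i,j) * G (i,j) := by
    intro i j
    by_cases hc : cc i j = 0
    · simp only [hFdef, hGdef, hc, zero_mul, mul_zero]
      rw [Real.zero_rpow (one_div_ne_zero hαne)]
      simp
    have hcpos : 0 < cc i j := lt_of_le_of_ne (hccnn i j) (Ne.symm hc)
    by_cases hl : lam i = 0
    · simp only [hFdef, hGdef, hl, zero_mul, mul_zero, fpow, if_true]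
      rw [Real.zero_rpow (one_div_ne_zero hαne)]
      simp [Real.zero_rpow (one_div_ne_zero hαne)]
    have hlpos : 0 < lam i := lt_of_le_of_ne (hlam i) (Ne.symm hl)
    by_cases hm0 : mv j = 0
    · exfalso
      have hgj : g j = 0 := by
        have := hm0
        rw [hmvdef] at this
        simp only at this
        rcases mul_eq_zero.mp this with hcase | hcase
        · exact absurd hcase (inv_ne_zero (ne_of_gt hT0))
        · exact hcase
      have hej : e j = 0 := (fpow_eq_zero_iff (he j)).mp hgj
      have := hsuppS j hej hη1' i
      rcases mul_eq_zero.mp this with hcase | hcase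
      · exact hl hcase
      · exact hc hcase
    have hmpos : 0 < mv j := lt_of_le_of_ne (hmv j) (Ne.symm hm0)
    have hhj : h j = mv j ^ (1-α) := by rw [hhdef]; exact fpow_of_pos _ hmpos
    have hfl : fpow (1/α) (lam i) = lam i ^ (1/α) := fpow_of_pos _ hlpos
    have hF1 : F (i,j) = cc i j ^ (1/α) * lam i ^ (1/α) * mv j ^ ((1-α) * (1/α)) := by
      rw [hFdef]
      simp only
      rw [hhj, Real.mul_rpow (mul_nonneg hcpos.le hlpos.le) (Real.rpow_nonneg hmpos.le _),
        Real.mul_rpow hcpos.le hlpos.le, ← Real.rpow_mul hmpos.le]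
    have hG1 : G (i,j) = cc i j ^ ((α-1)/α) * mv j ^ ((α-1)/α) := by
      rw [hGdef]
      simp only
      rw [Real.mul_rpow hcpos.le hmpos.le]
    have e1 : cc i j ^ (1/α) * cc i j ^ ((α-1)/α) = cc i j := by
      rw [← Real.rpow_add hcpos, show (1/α + (α-1)/α) = 1 by field_simp; ring, Real.rpow_one]
    have e2 : mv j ^ ((1-α)*(1/α)) * mv j ^ ((α-1)/α) = 1 := by
      rw [← Real.rpow_add hmpos, show ((1-α)*(1/α) + (α-1)/α) = 0 by field_simp; ring,
        Real.rpow_zero]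
    calc cc i j * fpow (1/α) (lam i) = cc i j * lam i ^ (1/α) := by rw [hfl]
      _ = (cc i j ^ (1/α) * cc i j ^ ((α-1)/α)) * lam i ^ (1/α)
          * (mv j ^ ((1-α)*(1/α)) * mv j ^ ((α-1)/α)) := by rw [e1, e2]; ring
      _ = F (i,j) * G (i,j) := by rw [hF1, hG1]; ring
  have hcS_eq : cS = ∑ ij : Fin d × Fin d, F ij * G ij := by
    rw [hcSdef, Fintype.sum_prod_type]
    calc ∑ i, fpow (1/α) (lam i) = ∑ i, ∑ j, cc i j * fpow (1/α) (lam i) := by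
          refine Finset.sum_congr rfl fun i _ => ?_
          rw [← Finset.sum_mul, hrow i, one_mul]
      _ = _ := Finset.sum_congr rfl fun i _ => Finset.sum_congr rfl fun j _ => hstep1 i j
  have hFsum : ∑ ij : Fin d × Fin d, |F ij| ^ α = A := by
    have hFa : ∀ ij : Fin d × Fin d, |F ij| ^ α = cc ij.1 ij.2 * lam ij.1 * h ij.2 := by
      intro ij
      have hbase : 0 ≤ cc ij.1 ij.2 * lam ij.1 * h ij.2 :=
        mul_nonneg (mul_nonneg (hccnn _ _) (hlam _)) (hh _)
      rw [hFdef]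
      simp only
      rw [abs_of_nonneg (Real.rpow_nonneg hbase _), one_div, Real.rpow_inv_rpow hbase hαne]
    rw [Finset.sum_congr rfl fun ij _ => hFa ij, Fintype.sum_prod_type, Finset.sum_comm, hAdef]
    refine Finset.sum_congr rfl fun j _ => ?_
    rw [Finset.sum_mul]
    exact Finset.sum_congr rfl fun i _ => by ring
  have hGsum : ∑ ij : Fin d × Fin d, |G ij| ^ (α/(α-1)) = 1 := by
    have hGa : ∀ ij : Fin d × Fin d, |G ij| ^ (α/(α-1)) = cc ij.1 ij.2 * mv ij.2 := by
      intro ij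
      have hbase : 0 ≤ cc ij.1 ij.2 * mv ij.2 := mul_nonneg (hccnn _ _) (hmv _)
      rw [hGdef]
      simp only
      rw [abs_of_nonneg (Real.rpow_nonneg hbase _),
        show (α-1)/α = (α/(α-1))⁻¹ by rw [inv_div],
        Real.rpow_inv_rpow hbase (by positivity)]
    rw [Finset.sum_congr rfl fun ij _ => hGa ij, Fintype.sum_prod_type, Finset.sum_comm]
    calc ∑ j, ∑ i, cc i j * mv j = ∑ j, mv j := by
          refine Finset.sum_congr rfl fun j _ => ?_
          rw [← Finset.sum_mul, hcol j, one_mul]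
      _ = 1 := hmvsum
  have holder := Real.inner_le_Lp_mul_Lq Finset.univ F G hpq
  rw [hFsum, hGsum, ← hcS_eq, Real.one_rpow, mul_one] at holder
  have hAc : cS ^ α ≤ A := by
    calc cS ^ α ≤ (A ^ (1/α)) ^ α :=
          Real.rpow_le_rpow hcS0.le holder hα0.le
      _ = A := by rw [one_div, Real.rpow_inv_rpow hAnn hαne]
  have hA0 : 0 < A := lt_of_lt_of_le (Real.rpow_pos_of_pos hcS0 α) hAc
  -- concavity of the logarithm
  have hlog2 : 0 < Real.log 2 := Real.log_pos (by norm_num)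
  have i1 : Real.logb 2 ((1-η)*A + η*B) = α * Real.logb 2 T := by
    rw [hIdT, Real.logb_rpow_eq_mul_logb_of_pos hT0]
  have i2 : (1-η) * Real.log A + η * Real.log B ≤ Real.log ((1-η)*A + η*B) := by
    have := (strictConcaveOn_log_Ioi.concaveOn).2 (Set.mem_Ioi.mpr hA0)
      (Set.mem_Ioi.mpr hB0) (by linarith : (0:ℝ) ≤ 1-η) hη0'.le (by ring)
    simpa [smul_eq_mul] using this
  have i2' : (1-η) * Real.logb 2 A + η * Real.logb 2 B ≤ Real.logb 2 ((1-η)*A + η*B) := by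
    calc (1-η) * Real.logb 2 A + η * Real.logb 2 B
        = ((1-η) * Real.log A + η * Real.log B) / Real.log 2 := by
          simp only [Real.logb]
          ring
      _ ≤ Real.log ((1-η)*A + η*B) / Real.log 2 := by
          gcongr
      _ = Real.logb 2 ((1-η)*A + η*B) := by simp [Real.logb]
  have i3 : α * Real.logb 2 cS ≤ Real.logb 2 A := by
    calc α * Real.logb 2 cS = Real.logb 2 (cS ^ α) := by
          rw [Real.logb_rpow_eq_mul_logb_of_pos hcS0]
      _ ≤ Real.logb 2 A :=
          Real.logb_le_logb_of_le (by norm_num) (Real.rpow_pos_of_pos hcS0 α) hAc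
  -- final arithmetic
  rw [hχ'T, hχc]
  have key : (1-η) * (α * Real.logb 2 cS) + η * Real.logb 2 B ≤ α * Real.logb 2 T := by
    calc (1-η) * (α * Real.logb 2 cS) + η * Real.logb 2 B
        ≤ (1-η) * Real.logb 2 A + η * Real.logb 2 B := by
          have := mul_le_mul_of_nonneg_left i3 (by linarith : (0:ℝ) ≤ 1-η)
          linarith
      _ ≤ Real.logb 2 ((1-η)*A + η*B) := i2'
      _ = α * Real.logb 2 T := i1
  have hk : (0:ℝ) < 1/(α-1) := by positivity
  have final : 0 ≤ (1/(α-1)) * (α * Real.logb 2 T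
      - ((1-η) * (α * Real.logb 2 cS) + η * Real.logb 2 B)) :=
    mul_nonneg hk.le (by linarith)
  rw [ge_iff_le, ← sub_nonneg]
  have goal_eq : α / (α - 1) * Real.logb 2 T - α / (α - 1) * Real.logb 2 cS
      - η * (1 / (α - 1) * Real.logb 2 B - α / (α - 1) * Real.logb 2 cS)
      = (1/(α-1)) * (α * Real.logb 2 T
        - ((1-η) * (α * Real.logb 2 cS) + η * Real.logb 2 B)) := by ring
  rw [goal_eq]
  exact final
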